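/- Let d ≥ 1 and k ≥ 1 be natural numbers and let A, B be d×d complex matrices with A invertible, B·A⁻¹·Bᵀ = 0, and Bᵀ·A⁻¹·B = 0. Let H be the (kd)×(kd) block-tridiagonal matrix whose (i,j) block (i, j ∈ {1,…,k}) equals A if i = j, B if j = i+1, Bᵀ if i = j+1, and 0 otherwise. Define the (kd)×(kd) matrix M blockwise by: the (i,j) block of M equals A⁻¹ if i = j, equals (−1)^{j−i}·A⁻¹·(B·A⁻¹)^{j−i} if i < j, and equals (−1)^{i−j}·A⁻¹·(Bᵀ·A⁻¹)^{i−j} if i > j. Then H·M = I and M·H = I; in particular H is invertible with H⁻¹ = M. -/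
import Mathlib


open Matrix


private lemma sum_fin_ite {α : Type*} [AddCommMonoid α] {k : ℕ} (c : ℕ) (g : Fin k → α) :
    ∑ l : Fin k, (if (l : ℕ) = c then g l else 0) = if h : c < k then g ⟨c, h⟩ else 0 := by
  split
  · next h =>
    rw [Fintype.sum_eq_single (⟨c, h⟩ : Fin k)]
    · simp
    · intro l hl
      rw [if_neg]
      simpa [Fin.ext_iff] using hl
  · next h =>
    apply Finset.sum_eq_zero
    intro l _
    rw [if_neg]
    intro hc
    exact h (hc ▸ l.isLt)

section Helpers
variable {d : ℕ} (A B : Matrix (Fin d) (Fin d) ℂ)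

private def Hb {k : ℕ} (i j : Fin k) : Matrix (Fin d) (Fin d) ℂ :=
  if (j : ℕ) = (i : ℕ) then A
  else if (j : ℕ) = (i : ℕ) + 1 then B
  else if (i : ℕ) = (j : ℕ) + 1 then Bᵀ else 0

private noncomputable def Mb {k : ℕ} (i j : Fin k) : Matrix (Fin d) (Fin d) ℂ :=
  if (i : ℕ) ≤ (j : ℕ) then
    ((-1 : ℂ) ^ ((j : ℕ) - (i : ℕ))) • (A⁻¹ * (B * A⁻¹) ^ ((j : ℕ) - (i : ℕ)))
  else ((-1 : ℂ) ^ ((i : ℕ) - (j : ℕ))) • (A⁻¹ * (Bᵀ * A⁻¹) ^ ((i : ℕ) - (j : ℕ)))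

private lemma Hb_split {k : ℕ} (i j : Fin k) :
    Hb A B i j = (if (j : ℕ) = (i : ℕ) then A else 0)
      + (if (j : ℕ) = (i : ℕ) + 1 then B else 0)
      + (if (i : ℕ) = (j : ℕ) + 1 then Bᵀ else 0) := by
  unfold Hb
  split_ifs <;> first | (exfalso; omega) | simp

end Helpers

section Facts
variable {d : ℕ} {A B : Matrix (Fin d) (Fin d) ℂ}

private lemma f0 (hA1 : A * A⁻¹ = 1) (n : ℕ) :
    A * (A⁻¹ * (B * A⁻¹) ^ n) = (B * A⁻¹) ^ n := by
  rw [← mul_assoc, hA1, one_mul]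

private lemma f0' (hA1 : A * A⁻¹ = 1) (n : ℕ) :
    A * (A⁻¹ * (Bᵀ * A⁻¹) ^ n) = (Bᵀ * A⁻¹) ^ n := by
  rw [← mul_assoc, hA1, one_mul]

private lemma f1 (n : ℕ) : B * (A⁻¹ * (B * A⁻¹) ^ n) = (B * A⁻¹) ^ (n + 1) := by
  rw [pow_succ', ← mul_assoc]

private lemma f1' (n : ℕ) : Bᵀ * (A⁻¹ * (Bᵀ * A⁻¹) ^ n) = (Bᵀ * A⁻¹) ^ (n + 1) := by
  rw [pow_succ', ← mul_assoc]

private lemma f2 (h2 : Bᵀ * A⁻¹ * B = 0) (n : ℕ) :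
    Bᵀ * (A⁻¹ * (B * A⁻¹) ^ (n + 1)) = 0 := by
  have e : Bᵀ * (A⁻¹ * (B * A⁻¹) ^ (n + 1))
      = (Bᵀ * A⁻¹ * B) * (A⁻¹ * (B * A⁻¹) ^ n) := by
    rw [pow_succ']; simp only [mul_assoc]
  rw [e, h2, zero_mul]

private lemma f2' (h1 : B * A⁻¹ * Bᵀ = 0) (n : ℕ) :
    B * (A⁻¹ * (Bᵀ * A⁻¹) ^ (n + 1)) = 0 := by
  have e : B * (A⁻¹ * (Bᵀ * A⁻¹) ^ (n + 1))
      = (B * A⁻¹ * Bᵀ) * (A⁻¹ * (Bᵀ * A⁻¹) ^ n) := by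
    rw [pow_succ']; simp only [mul_assoc]
  rw [e, h1, zero_mul]

end Facts

private lemma key_HM {d k : ℕ} {A B : Matrix (Fin d) (Fin d) ℂ}
    (hA1 : A * A⁻¹ = 1) (hA2 : A⁻¹ * A = 1)
    (h1 : B * A⁻¹ * Bᵀ = 0) (h2 : Bᵀ * A⁻¹ * B = 0) (i j : Fin k) :
    ∑ l : Fin k, Hb A B i l * Mb A B l j = if i = j then 1 else 0 := by
  have hS3 : ∑ l : Fin k, (if (i : ℕ) = (l : ℕ) + 1 then Bᵀ * Mb A B l j else 0)
      = if h : 1 ≤ (i : ℕ) then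
          Bᵀ * Mb A B ⟨(i : ℕ) - 1, Nat.lt_of_le_of_lt (Nat.sub_le _ _) i.isLt⟩ j
        else 0 := by
    by_cases hi : 1 ≤ (i : ℕ)
    · rw [dif_pos hi]
      have hc : (∑ l : Fin k, if (i : ℕ) = (l : ℕ) + 1 then Bᵀ * Mb A B l j else 0)
          = ∑ l : Fin k, if (l : ℕ) = (i : ℕ) - 1 then Bᵀ * Mb A B l j else 0 :=
        Finset.sum_congr rfl (fun l _ => if_congr (by omega) rfl rfl)
      rw [hc, sum_fin_ite, dif_pos (Nat.lt_of_le_of_lt (Nat.sub_le _ _) i.isLt)]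
    · rw [dif_neg hi]
      exact Finset.sum_eq_zero fun l _ => if_neg (by omega)
  rw [show (∑ l : Fin k, Hb A B i l * Mb A B l j) =
      (∑ l : Fin k, (if (l : ℕ) = (i : ℕ) then A * Mb A B l j else 0))
        + (∑ l : Fin k, (if (l : ℕ) = (i : ℕ) + 1 then B * Mb A B l j else 0))
        + (∑ l : Fin k, (if (i : ℕ) = (l : ℕ) + 1 then Bᵀ * Mb A B l j else 0)) from by
    rw [← Finset.sum_add_distrib, ← Finset.sum_add_distrib]
    exact Finset.sum_congr rfl fun l _ => by
      rw [Hb_split, add_mul, add_mul, ite_mul, ite_mul, ite_mul, zero_mul]]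
  rw [sum_fin_ite, sum_fin_ite, hS3, dif_pos i.isLt]
  simp only [Fin.eta]
  rcases Nat.lt_trichotomy (i : ℕ) (j : ℕ) with hij | hij | hij
  · -- i < j
    have hne : i ≠ j := by intro e; subst e; omega
    obtain ⟨m, hm⟩ : ∃ m, (j : ℕ) - (i : ℕ) = m + 1 := ⟨(j : ℕ) - (i : ℕ) - 1, by omega⟩
    rw [if_neg hne]
    have e1 : Mb A B i j = ((-1 : ℂ) ^ (m + 1)) • (A⁻¹ * (B * A⁻¹) ^ (m + 1)) := by
      unfold Mb
      rw [if_pos (Nat.le_of_lt hij), hm]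
    have hlt : (i : ℕ) + 1 < k := by have := j.isLt; omega
    rw [dif_pos hlt]
    have e2 : Mb A B (⟨(i : ℕ) + 1, hlt⟩ : Fin k) j
        = ((-1 : ℂ) ^ m) • (A⁻¹ * (B * A⁻¹) ^ m) := by
      unfold Mb
      rw [show (((⟨(i : ℕ) + 1, hlt⟩ : Fin k)) : ℕ) = (i : ℕ) + 1 from rfl,
        if_pos (by omega), show (j : ℕ) - ((i : ℕ) + 1) = m from by omega]
    have e3 : (if h : 1 ≤ (i : ℕ) then
          Bᵀ * Mb A B ⟨(i : ℕ) - 1, Nat.lt_of_le_of_lt (Nat.sub_le _ _) i.isLt⟩ j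
        else 0) = 0 := by
      split
      · next h =>
        have e4 : Mb A B (⟨(i : ℕ) - 1, Nat.lt_of_le_of_lt (Nat.sub_le _ _) i.isLt⟩ : Fin k) j
            = ((-1 : ℂ) ^ (m + 1 + 1)) • (A⁻¹ * (B * A⁻¹) ^ (m + 1 + 1)) := by
          unfold Mb
          rw [show (((⟨(i : ℕ) - 1, Nat.lt_of_le_of_lt (Nat.sub_le _ _) i.isLt⟩ : Fin k)) : ℕ)
              = (i : ℕ) - 1 from rfl,
            if_pos (by omega), show (j : ℕ) - ((i : ℕ) - 1) = m + 1 + 1 from by omega]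
        rw [e4, mul_smul_comm, f2 h2, smul_zero]
      · rfl
    rw [e1, e2, e3, mul_smul_comm, mul_smul_comm, f0 hA1, f1, add_zero, pow_succ,
      mul_neg_one, neg_smul, neg_add_cancel]
  · -- i = j
    have hij' : i = j := Fin.ext hij
    subst hij'
    rw [if_pos rfl]
    have e1 : Mb A B i i = A⁻¹ := by unfold Mb; simp
    have e2 : (if h : (i : ℕ) + 1 < k then B * Mb A B ⟨(i : ℕ) + 1, h⟩ i else 0) = 0 := by
      split
      · next h =>
        have e2' : Mb A B (⟨(i : ℕ) + 1, h⟩ : Fin k) i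
            = ((-1 : ℂ) ^ 1) • (A⁻¹ * (Bᵀ * A⁻¹) ^ 1) := by
          unfold Mb
          rw [show (((⟨(i : ℕ) + 1, h⟩ : Fin k)) : ℕ) = (i : ℕ) + 1 from rfl,
            if_neg (by omega), show (i : ℕ) + 1 - (i : ℕ) = 1 from by omega]
        rw [e2', mul_smul_comm, show (1 : ℕ) = 0 + 1 from rfl, f2' h1, smul_zero]
      · rfl
    have e3 : (if h : 1 ≤ (i : ℕ) then
          Bᵀ * Mb A B ⟨(i : ℕ) - 1, Nat.lt_of_le_of_lt (Nat.sub_le _ _) i.isLt⟩ i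
        else 0) = 0 := by
      split
      · next h =>
        have e3' : Mb A B (⟨(i : ℕ) - 1, Nat.lt_of_le_of_lt (Nat.sub_le _ _) i.isLt⟩ : Fin k) i
            = ((-1 : ℂ) ^ 1) • (A⁻¹ * (B * A⁻¹) ^ 1) := by
          unfold Mb
          rw [show (((⟨(i : ℕ) - 1, Nat.lt_of_le_of_lt (Nat.sub_le _ _) i.isLt⟩ : Fin k)) : ℕ)
              = (i : ℕ) - 1 from rfl,
            if_pos (by omega), show (i : ℕ) - ((i : ℕ) - 1) = 1 from by omega]
        rw [e3', mul_smul_comm, show (1 : ℕ) = 0 + 1 from rfl, f2 h2, smul_zero]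
      · rfl
    rw [e1, e2, e3, add_zero, add_zero, hA1]
  · -- j < i
    have hne : i ≠ j := by intro e; subst e; omega
    obtain ⟨m, hm⟩ : ∃ m, (i : ℕ) - (j : ℕ) = m + 1 := ⟨(i : ℕ) - (j : ℕ) - 1, by omega⟩
    rw [if_neg hne]
    have e1 : Mb A B i j = ((-1 : ℂ) ^ (m + 1)) • (A⁻¹ * (Bᵀ * A⁻¹) ^ (m + 1)) := by
      unfold Mb
      rw [if_neg (by omega), hm]
    have e2 : (if h : (i : ℕ) + 1 < k then B * Mb A B ⟨(i : ℕ) + 1, h⟩ j else 0) = 0 := by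
      split
      · next h =>
        have e2' : Mb A B (⟨(i : ℕ) + 1, h⟩ : Fin k) j
            = ((-1 : ℂ) ^ (m + 1 + 1)) • (A⁻¹ * (Bᵀ * A⁻¹) ^ (m + 1 + 1)) := by
          unfold Mb
          rw [show (((⟨(i : ℕ) + 1, h⟩ : Fin k)) : ℕ) = (i : ℕ) + 1 from rfl,
            if_neg (by omega), show (i : ℕ) + 1 - (j : ℕ) = m + 1 + 1 from by omega]
        rw [e2', mul_smul_comm, f2' h1, smul_zero]
      · rfl
    have h1i : 1 ≤ (i : ℕ) := by omega
    rw [dif_pos h1i]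
    have e3 : Mb A B (⟨(i : ℕ) - 1, Nat.lt_of_le_of_lt (Nat.sub_le _ _) i.isLt⟩ : Fin k) j
        = ((-1 : ℂ) ^ m) • (A⁻¹ * (Bᵀ * A⁻¹) ^ m) := by
      unfold Mb
      rw [show (((⟨(i : ℕ) - 1, Nat.lt_of_le_of_lt (Nat.sub_le _ _) i.isLt⟩ : Fin k)) : ℕ)
          = (i : ℕ) - 1 from rfl]
      split
      · next hc =>
        have hm0 : m = 0 := by omega
        rw [show (j : ℕ) - ((i : ℕ) - 1) = 0 from by omega, hm0]
        simp
      · next hc =>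
        rw [show (i : ℕ) - 1 - (j : ℕ) = m from by omega]
    rw [e1, e2, e3, mul_smul_comm, mul_smul_comm, f0' hA1, f1', add_zero, pow_succ,
      mul_neg_one, neg_smul, neg_add_cancel]
private lemma gA {d : ℕ} {A B : Matrix (Fin d) (Fin d) ℂ} (hA2 : A⁻¹ * A = 1) :
    (A⁻¹ * (B * A⁻¹) ^ 0) * A = 1 := by rw [pow_zero, mul_one, hA2]

private lemma g0 {d : ℕ} {A B : Matrix (Fin d) (Fin d) ℂ} (hA2 : A⁻¹ * A = 1) (n : ℕ) :
    (A⁻¹ * (B * A⁻¹) ^ (n + 1)) * A = (A⁻¹ * (B * A⁻¹) ^ n) * B := by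
  have e : (A⁻¹ * (B * A⁻¹) ^ (n + 1)) * A
      = ((A⁻¹ * (B * A⁻¹) ^ n) * B) * (A⁻¹ * A) := by
    rw [pow_succ]; simp only [mul_assoc]
  rw [e, hA2, mul_one]

private lemma g0' {d : ℕ} {A B : Matrix (Fin d) (Fin d) ℂ} (hA2 : A⁻¹ * A = 1) (n : ℕ) :
    (A⁻¹ * (Bᵀ * A⁻¹) ^ (n + 1)) * A = (A⁻¹ * (Bᵀ * A⁻¹) ^ n) * Bᵀ := by
  have e : (A⁻¹ * (Bᵀ * A⁻¹) ^ (n + 1)) * A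
      = ((A⁻¹ * (Bᵀ * A⁻¹) ^ n) * Bᵀ) * (A⁻¹ * A) := by
    rw [pow_succ]; simp only [mul_assoc]
  rw [e, hA2, mul_one]

private lemma g2 {d : ℕ} {A B : Matrix (Fin d) (Fin d) ℂ} (h1 : B * A⁻¹ * Bᵀ = 0) (n : ℕ) :
    (A⁻¹ * (B * A⁻¹) ^ (n + 1)) * Bᵀ = 0 := by
  have e : (A⁻¹ * (B * A⁻¹) ^ (n + 1)) * Bᵀ
      = (A⁻¹ * (B * A⁻¹) ^ n) * (B * A⁻¹ * Bᵀ) := by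
    rw [pow_succ]; simp only [mul_assoc]
  rw [e, h1, mul_zero]

private lemma g2' {d : ℕ} {A B : Matrix (Fin d) (Fin d) ℂ} (h2 : Bᵀ * A⁻¹ * B = 0) (n : ℕ) :
    (A⁻¹ * (Bᵀ * A⁻¹) ^ (n + 1)) * B = 0 := by
  have e : (A⁻¹ * (Bᵀ * A⁻¹) ^ (n + 1)) * B
      = (A⁻¹ * (Bᵀ * A⁻¹) ^ n) * (Bᵀ * A⁻¹ * B) := by
    rw [pow_succ]; simp only [mul_assoc]
  rw [e, h2, mul_zero]

private lemma key_MH {d k : ℕ} {A B : Matrix (Fin d) (Fin d) ℂ}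
    (hA1 : A * A⁻¹ = 1) (hA2 : A⁻¹ * A = 1)
    (h1 : B * A⁻¹ * Bᵀ = 0) (h2 : Bᵀ * A⁻¹ * B = 0) (i j : Fin k) :
    ∑ l : Fin k, Mb A B i l * Hb A B l j = if i = j then 1 else 0 := by
  have hS2 : ∑ l : Fin k, (if (j : ℕ) = (l : ℕ) + 1 then Mb A B i l * B else 0)
      = if h : 1 ≤ (j : ℕ) then
          Mb A B i ⟨(j : ℕ) - 1, Nat.lt_of_le_of_lt (Nat.sub_le _ _) j.isLt⟩ * B
        else 0 := by
    by_cases hj : 1 ≤ (j : ℕ)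
    · rw [dif_pos hj]
      have hc : (∑ l : Fin k, if (j : ℕ) = (l : ℕ) + 1 then Mb A B i l * B else 0)
          = ∑ l : Fin k, if (l : ℕ) = (j : ℕ) - 1 then Mb A B i l * B else 0 :=
        Finset.sum_congr rfl (fun l _ => if_congr (by omega) rfl rfl)
      rw [hc, sum_fin_ite, dif_pos (Nat.lt_of_le_of_lt (Nat.sub_le _ _) j.isLt)]
    · rw [dif_neg hj]
      exact Finset.sum_eq_zero fun l _ => if_neg (by omega)
  have hS1 : ∑ l : Fin k, (if (j : ℕ) = (l : ℕ) then Mb A B i l * A else 0)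
      = Mb A B i j * A := by
    have hc : (∑ l : Fin k, if (j : ℕ) = (l : ℕ) then Mb A B i l * A else 0)
        = ∑ l : Fin k, if (l : ℕ) = (j : ℕ) then Mb A B i l * A else 0 :=
      Finset.sum_congr rfl (fun l _ => if_congr (by omega) rfl rfl)
    rw [hc, sum_fin_ite, dif_pos j.isLt]
  rw [show (∑ l : Fin k, Mb A B i l * Hb A B l j) =
      (∑ l : Fin k, (if (j : ℕ) = (l : ℕ) then Mb A B i l * A else 0))
        + (∑ l : Fin k, (if (j : ℕ) = (l : ℕ) + 1 then Mb A B i l * B else 0))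
        + (∑ l : Fin k, (if (l : ℕ) = (j : ℕ) + 1 then Mb A B i l * Bᵀ else 0)) from by
    rw [← Finset.sum_add_distrib, ← Finset.sum_add_distrib]
    exact Finset.sum_congr rfl fun l _ => by
      rw [Hb_split, mul_add, mul_add, mul_ite, mul_ite, mul_ite, mul_zero]]
  rw [hS1, hS2, sum_fin_ite]
  rcases Nat.lt_trichotomy (i : ℕ) (j : ℕ) with hij | hij | hij
  · -- i < j
    have hne : i ≠ j := by intro e; subst e; omega
    obtain ⟨m, hm⟩ : ∃ m, (j : ℕ) - (i : ℕ) = m + 1 := ⟨(j : ℕ) - (i : ℕ) - 1, by omega⟩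
    rw [if_neg hne]
    have e1 : Mb A B i j = ((-1 : ℂ) ^ (m + 1)) • (A⁻¹ * (B * A⁻¹) ^ (m + 1)) := by
      unfold Mb
      rw [if_pos (Nat.le_of_lt hij), hm]
    have h1j : 1 ≤ (j : ℕ) := by omega
    rw [dif_pos h1j]
    have e2 : Mb A B i (⟨(j : ℕ) - 1, Nat.lt_of_le_of_lt (Nat.sub_le _ _) j.isLt⟩ : Fin k)
        = ((-1 : ℂ) ^ m) • (A⁻¹ * (B * A⁻¹) ^ m) := by
      unfold Mb
      rw [show (((⟨(j : ℕ) - 1, Nat.lt_of_le_of_lt (Nat.sub_le _ _) j.isLt⟩ : Fin k)) : ℕ)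
          = (j : ℕ) - 1 from rfl,
        if_pos (by omega), show (j : ℕ) - 1 - (i : ℕ) = m from by omega]
    have e3 : (if h : (j : ℕ) + 1 < k then Mb A B i ⟨(j : ℕ) + 1, h⟩ * Bᵀ else 0) = 0 := by
      split
      · next h =>
        have e3' : Mb A B i (⟨(j : ℕ) + 1, h⟩ : Fin k)
            = ((-1 : ℂ) ^ (m + 1 + 1)) • (A⁻¹ * (B * A⁻¹) ^ (m + 1 + 1)) := by
          unfold Mb
          rw [show (((⟨(j : ℕ) + 1, h⟩ : Fin k)) : ℕ) = (j : ℕ) + 1 from rfl,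
            if_pos (by omega), show (j : ℕ) + 1 - (i : ℕ) = m + 1 + 1 from by omega]
        rw [e3', smul_mul_assoc, g2 h1, smul_zero]
      · rfl
    rw [e1, e2, e3, smul_mul_assoc, smul_mul_assoc, g0 hA2, add_zero, pow_succ,
      mul_neg_one, neg_smul, neg_add_cancel]
  · -- i = j
    have hij' : i = j := Fin.ext hij
    subst hij'
    rw [if_pos rfl]
    have e1 : Mb A B i i = A⁻¹ := by unfold Mb; simp
    have e2 : (if h : 1 ≤ (i : ℕ) then
          Mb A B i ⟨(i : ℕ) - 1, Nat.lt_of_le_of_lt (Nat.sub_le _ _) i.isLt⟩ * B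
        else 0) = 0 := by
      split
      · next h =>
        have e2' : Mb A B i (⟨(i : ℕ) - 1, Nat.lt_of_le_of_lt (Nat.sub_le _ _) i.isLt⟩ : Fin k)
            = ((-1 : ℂ) ^ 1) • (A⁻¹ * (Bᵀ * A⁻¹) ^ 1) := by
          unfold Mb
          rw [show (((⟨(i : ℕ) - 1, Nat.lt_of_le_of_lt (Nat.sub_le _ _) i.isLt⟩ : Fin k)) : ℕ)
              = (i : ℕ) - 1 from rfl,
            if_neg (by omega), show (i : ℕ) - ((i : ℕ) - 1) = 1 from by omega]
        rw [e2', smul_mul_assoc, show (1 : ℕ) = 0 + 1 from rfl, g2' h2, smul_zero]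
      · rfl
    have e3 : (if h : (i : ℕ) + 1 < k then Mb A B i ⟨(i : ℕ) + 1, h⟩ * Bᵀ else 0) = 0 := by
      split
      · next h =>
        have e3' : Mb A B i (⟨(i : ℕ) + 1, h⟩ : Fin k)
            = ((-1 : ℂ) ^ 1) • (A⁻¹ * (B * A⁻¹) ^ 1) := by
          unfold Mb
          rw [show (((⟨(i : ℕ) + 1, h⟩ : Fin k)) : ℕ) = (i : ℕ) + 1 from rfl,
            if_pos (by omega), show (i : ℕ) + 1 - (i : ℕ) = 1 from by omega]
        rw [e3', smul_mul_assoc, show (1 : ℕ) = 0 + 1 from rfl, g2 h1, smul_zero]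
      · rfl
    rw [e1, e2, e3, add_zero, add_zero, hA2]
  · -- j < i
    have hne : i ≠ j := by intro e; subst e; omega
    obtain ⟨m, hm⟩ : ∃ m, (i : ℕ) - (j : ℕ) = m + 1 := ⟨(i : ℕ) - (j : ℕ) - 1, by omega⟩
    rw [if_neg hne]
    have e1 : Mb A B i j = ((-1 : ℂ) ^ (m + 1)) • (A⁻¹ * (Bᵀ * A⁻¹) ^ (m + 1)) := by
      unfold Mb
      rw [if_neg (by omega), hm]
    have e2 : (if h : 1 ≤ (j : ℕ) then
          Mb A B i ⟨(j : ℕ) - 1, Nat.lt_of_le_of_lt (Nat.sub_le _ _) j.isLt⟩ * B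
        else 0) = 0 := by
      split
      · next h =>
        have e2' : Mb A B i (⟨(j : ℕ) - 1, Nat.lt_of_le_of_lt (Nat.sub_le _ _) j.isLt⟩ : Fin k)
            = ((-1 : ℂ) ^ (m + 1 + 1)) • (A⁻¹ * (Bᵀ * A⁻¹) ^ (m + 1 + 1)) := by
          unfold Mb
          rw [show (((⟨(j : ℕ) - 1, Nat.lt_of_le_of_lt (Nat.sub_le _ _) j.isLt⟩ : Fin k)) : ℕ)
              = (j : ℕ) - 1 from rfl,
            if_neg (by omega), show (i : ℕ) - ((j : ℕ) - 1) = m + 1 + 1 from by omega]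
        rw [e2', smul_mul_assoc, g2' h2, smul_zero]
      · rfl
    have hjk : (j : ℕ) + 1 < k := by have := i.isLt; omega
    rw [dif_pos hjk]
    have e3 : Mb A B i (⟨(j : ℕ) + 1, hjk⟩ : Fin k)
        = ((-1 : ℂ) ^ m) • (A⁻¹ * (Bᵀ * A⁻¹) ^ m) := by
      unfold Mb
      rw [show (((⟨(j : ℕ) + 1, hjk⟩ : Fin k)) : ℕ) = (j : ℕ) + 1 from rfl]
      split
      · next hc =>
        have hm0 : m = 0 := by omega
        rw [show (j : ℕ) + 1 - (i : ℕ) = 0 from by omega, hm0]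
        simp
      · next hc =>
        rw [show (i : ℕ) - ((j : ℕ) + 1) = m from by omega]
    rw [e1, e2, e3, smul_mul_assoc, smul_mul_assoc, g0' hA2, add_zero, pow_succ,
      mul_neg_one, neg_smul, neg_add_cancel]

private lemma entry_mul {d k : ℕ} (P Q : Matrix (Fin k × Fin d) (Fin k × Fin d) ℂ)
    (Pb Qb : Fin k → Fin k → Matrix (Fin d) (Fin d) ℂ)
    (hP : ∀ i j a b, P (i,a) (j,b) = Pb i j a b)
    (hQ : ∀ i j a b, Q (i,a) (j,b) = Qb i j a b)
    (h : ∀ i j, ∑ l : Fin k, Pb i l * Qb l j = if i = j then 1 else 0) :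
    P * Q = 1 := by
  ext ⟨i,a⟩ ⟨j,b⟩
  rw [Matrix.mul_apply, Fintype.sum_prod_type]
  have step : ∀ l : Fin k, ∑ c : Fin d, P (i,a) (l,c) * Q (l,c) (j,b) = (Pb i l * Qb l j) a b := by
    intro l; rw [Matrix.mul_apply]; exact Finset.sum_congr rfl fun c _ => by rw [hP, hQ]
  rw [Finset.sum_congr rfl fun l _ => step l, ← Matrix.sum_apply, h]
  by_cases hij : i = j <;> simp [hij, Matrix.one_apply, Prod.ext_iff]


/-- Let `A, B` be `d×d` complex matrices with `A` invertible,
`B A⁻¹ Bᵀ = 0` and `Bᵀ A⁻¹ B = 0`.  Let `H` be the block-tridiagonal matrix with diagonal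
blocks `A`, superdiagonal blocks `B` and subdiagonal blocks `Bᵀ`, and let `M` be the block
matrix whose `(i,j)` block is `A⁻¹` for `i = j`, `(−1)^(j−i) A⁻¹ (B A⁻¹)^(j−i)` for `i < j`,
and `(−1)^(i−j) A⁻¹ (Bᵀ A⁻¹)^(i−j)` for `i > j`.  Then `H M = 1` and `M H = 1`. -/
theorem statement10 (d k : ℕ) (hd : 1 ≤ d) (hk : 1 ≤ k)
    (A B : Matrix (Fin d) (Fin d) ℂ) (hA : IsUnit A)
    (h1 : B * A⁻¹ * Bᵀ = 0) (h2 : Bᵀ * A⁻¹ * B = 0)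
    (H M : Matrix (Fin k × Fin d) (Fin k × Fin d) ℂ)
    (hH : ∀ (i j : Fin k) (a b : Fin d), H (i, a) (j, b) =
      if i = j then A a b
      else if (j : ℕ) = (i : ℕ) + 1 then B a b
      else if (i : ℕ) = (j : ℕ) + 1 then Bᵀ a b
      else 0)
    (hM : ∀ (i j : Fin k) (a b : Fin d), M (i, a) (j, b) =
      if i = j then A⁻¹ a b
      else if (i : ℕ) < (j : ℕ) then
        (-1 : ℂ) ^ ((j : ℕ) - (i : ℕ)) * (A⁻¹ * (B * A⁻¹) ^ ((j : ℕ) - (i : ℕ))) a b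
      else
        (-1 : ℂ) ^ ((i : ℕ) - (j : ℕ)) * (A⁻¹ * (Bᵀ * A⁻¹) ^ ((i : ℕ) - (j : ℕ))) a b) :
    H * M = 1 ∧ M * H = 1 := by
  have hdet : IsUnit A.det := (Matrix.isUnit_iff_isUnit_det A).mp hA
  have hA1 : A * A⁻¹ = 1 := Matrix.mul_nonsing_inv A hdet
  have hA2 : A⁻¹ * A = 1 := Matrix.nonsing_inv_mul A hdet
  have hP : ∀ (i j : Fin k) (a b : Fin d), H (i, a) (j, b) = Hb A B i j a b := by
    intro i j a b
    rw [hH]; unfold Hb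
    by_cases e : i = j
    · subst e; rw [if_pos rfl, if_pos rfl]
    · rw [if_neg e, if_neg (show ¬((j : ℕ) = (i : ℕ)) from fun h => e (Fin.ext h.symm))]
      split_ifs <;> simp
  have hQ : ∀ (i j : Fin k) (a b : Fin d), M (i, a) (j, b) = Mb A B i j a b := by
    intro i j a b
    rw [hM]; unfold Mb
    by_cases e : i = j
    · subst e; rw [if_pos rfl, if_pos (le_refl _)]; simp
    · rw [if_neg e]
      have hne : (i : ℕ) ≠ (j : ℕ) := fun h => e (Fin.ext h)
      by_cases elt : (i : ℕ) < (j : ℕ)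
      · rw [if_pos elt, if_pos (Nat.le_of_lt elt)]
        simp [Matrix.smul_apply, smul_eq_mul]
      · rw [if_neg elt, if_neg (show ¬((i : ℕ) ≤ (j : ℕ)) from by omega)]
        simp [Matrix.smul_apply, smul_eq_mul]
  exact ⟨entry_mul H M (Hb A B) (Mb A B) hP hQ (key_HM hA1 hA2 h1 h2),
    entry_mul M H (Mb A B) (Hb A B) hQ hP (key_MH hA1 hA2 h1 h2)⟩
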